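/- Carlitz's identity: for every n ≥ 1 and p ∈ (0,1), ∑_{k≥1} k^n p (1-p)^{k-1} = p^{-n} ∑_{q=0}^{n-1} ⟨n over q⟩ (1-p)^q, where ⟨n over q⟩ denotes the Eulerian numbers. -/

import Mathlib

/-- The number of descents of a permutation `σ` of `Fin n`:
positions `i` with `i+1 < n` and `σ(i+1) < σ(i)`. -/
def descentCount (n : ℕ) (σ : Equiv.Perm (Fin n)) : ℕ :=
  (Finset.univ.filter
    (fun i : Fin n => ∃ h : (i : ℕ) + 1 < n, σ ⟨(i : ℕ) + 1, h⟩ < σ i)).card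

/-- The Eulerian number `⟨n over q⟩`: the number of permutations of `{1,...,n}`
with exactly `q` descents. -/
def eulerian (n q : ℕ) : ℕ :=
  (Finset.univ.filter (fun σ : Equiv.Perm (Fin n) => descentCount n σ = q)).card

namespace CarlitzAux

open Finset

variable {n : ℕ}

/-- A chain lemma: strict monotonicity from consecutive steps. -/
lemma chain_lt {α : Type*} [Preorder α] {f : Fin n → α}
    (hstep : ∀ (i : ℕ) (hi : i + 1 < n), f ⟨i, Nat.lt_of_succ_lt hi⟩ < f ⟨i + 1, hi⟩) :
    StrictMono f := by
  have aux : ∀ (t i : ℕ) (h : i + t < n) (hi : i < n), 0 < t → f ⟨i, hi⟩ < f ⟨i + t, h⟩ := by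
    intro t
    induction t with
    | zero => omega
    | succ t ih =>
      intro i h hi ht
      rcases Nat.eq_zero_or_pos t with h0 | h0
      · subst h0; exact hstep i (by omega)
      · refine lt_trans (ih i (by omega) hi h0) ?_
        have := hstep (i + t) (by omega)
        convert this using 2
        rfl
  intro a b hab
  have hv : (a : ℕ) < (b : ℕ) := hab
  have := aux ((b : ℕ) - (a : ℕ)) (a : ℕ) (by omega) a.isLt (by omega)
  have e1 : (⟨(a : ℕ), a.isLt⟩ : Fin n) = a := rfl
  have e2 : (⟨(a : ℕ) + ((b : ℕ) - (a : ℕ)), by omega⟩ : Fin n) = b := by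
    ext; simp; omega
  rw [e1, e2] at this
  exact this

lemma chain_le {α : Type*} [Preorder α] {f : Fin n → α}
    (hstep : ∀ (i : ℕ) (hi : i + 1 < n), f ⟨i, Nat.lt_of_succ_lt hi⟩ ≤ f ⟨i + 1, hi⟩) :
    Monotone f := by
  have aux : ∀ (t i : ℕ) (h : i + t < n) (hi : i < n), f ⟨i, hi⟩ ≤ f ⟨i + t, h⟩ := by
    intro t
    induction t with
    | zero => intro i h hi; exact le_of_eq rfl
    | succ t ih =>
      intro i h hi
      refine le_trans (ih i (by omega) hi) ?_
      have := hstep (i + t) (by omega)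
      convert this using 2
      rfl
  intro a b hab
  have hv : (a : ℕ) ≤ (b : ℕ) := hab
  have := aux ((b : ℕ) - (a : ℕ)) (a : ℕ) (by omega) a.isLt
  have e2 : (⟨(a : ℕ) + ((b : ℕ) - (a : ℕ)), by omega⟩ : Fin n) = b := by
    ext; simp; omega
  rw [show (⟨(a : ℕ), a.isLt⟩ : Fin n) = a from rfl, e2] at this
  exact this

lemma self_le_of_strictMono {f : Fin n → ℕ} (hf : StrictMono f) : ∀ i : Fin n, (i : ℕ) ≤ f i := by
  have : ∀ v : ℕ, ∀ i : Fin n, (i : ℕ) = v → v ≤ f i := by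
    intro v
    induction v with
    | zero => intro i _; exact Nat.zero_le _
    | succ v ih =>
      intro i hiv
      have hv : v < n := by omega
      have hj := ih ⟨v, hv⟩ rfl
      have hlt : f ⟨v, hv⟩ < f i := hf (by simp [Fin.lt_def]; omega)
      omega
  exact fun i => this (i : ℕ) i rfl

variable (σ : Equiv.Perm (Fin n))

/-- number of descents of `σ` at positions `< i` -/
def dBelow (i : ℕ) : ℕ :=
  (Finset.univ.filter (fun j : Fin n =>
    (∃ h : (j : ℕ) + 1 < n, σ ⟨(j : ℕ) + 1, h⟩ < σ j) ∧ (j : ℕ) < i)).card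

lemma dBelow_mono {i i' : ℕ} (h : i ≤ i') : dBelow σ i ≤ dBelow σ i' := by
  apply card_le_card
  intro j hj
  simp only [mem_filter] at hj ⊢
  exact ⟨hj.1, hj.2.1, lt_of_lt_of_le hj.2.2 h⟩

lemma dBelow_le (i : ℕ) : dBelow σ i ≤ i := by
  unfold dBelow
  calc _ ≤ (Finset.range i).card := by
        refine card_le_card_of_injOn (fun j => (j : ℕ)) ?_ ?_
        · intro j hj
          simp only [mem_coe, mem_filter] at hj
          simp [hj.2.2]
        · intro a _ b _ hab
          exact Fin.ext hab
    _ = i := card_range i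

lemma dBelow_eq (i : ℕ) (hi : n ≤ i + 1) : dBelow σ i = descentCount n σ := by
  unfold dBelow descentCount
  congr 1
  apply filter_congr
  intro j _
  simp only [and_iff_left_iff_imp]
  rintro ⟨h, -⟩
  omega

lemma dBelow_succ (i : ℕ) (hi : i < n) :
    dBelow σ (i + 1) =
      dBelow σ i + (if ∃ h : i + 1 < n, σ ⟨i + 1, h⟩ < σ ⟨i, hi⟩ then 1 else 0) := by
  classical
  unfold dBelow
  have hsplit : (Finset.univ.filter (fun j : Fin n =>
      (∃ h : (j : ℕ) + 1 < n, σ ⟨(j : ℕ) + 1, h⟩ < σ j) ∧ (j : ℕ) < i + 1)) =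
      (Finset.univ.filter (fun j : Fin n =>
      (∃ h : (j : ℕ) + 1 < n, σ ⟨(j : ℕ) + 1, h⟩ < σ j) ∧ (j : ℕ) < i)) ∪
      (Finset.univ.filter (fun j : Fin n =>
      (∃ h : (j : ℕ) + 1 < n, σ ⟨(j : ℕ) + 1, h⟩ < σ j) ∧ j = ⟨i, hi⟩)) := by
    ext j
    simp only [mem_filter, mem_union, mem_univ, true_and, Fin.ext_iff]
    constructor
    · rintro ⟨hP, hlt⟩
      rcases Nat.lt_or_ge (j : ℕ) i with h | h
      · exact Or.inl ⟨hP, h⟩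
      · exact Or.inr ⟨hP, by omega⟩
    · rintro (⟨hP, hlt⟩ | ⟨hP, heq⟩)
      · exact ⟨hP, by omega⟩
      · exact ⟨hP, by omega⟩
  rw [hsplit, card_union_of_disjoint]
  · congr 1
    by_cases hP : ∃ h : i + 1 < n, σ ⟨i + 1, h⟩ < σ ⟨i, hi⟩
    · rw [if_pos hP]
      have : (Finset.univ.filter (fun j : Fin n =>
          (∃ h : (j : ℕ) + 1 < n, σ ⟨(j : ℕ) + 1, h⟩ < σ j) ∧ j = ⟨i, hi⟩)) = {⟨i, hi⟩} := by
        ext j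
        simp only [mem_filter, mem_univ, true_and, mem_singleton]
        constructor
        · rintro ⟨-, h⟩; exact h
        · rintro rfl; exact ⟨hP, rfl⟩
      rw [this, card_singleton]
    · rw [if_neg hP]
      have : (Finset.univ.filter (fun j : Fin n =>
          (∃ h : (j : ℕ) + 1 < n, σ ⟨(j : ℕ) + 1, h⟩ < σ j) ∧ j = ⟨i, hi⟩)) = ∅ := by
        ext j
        simp only [mem_filter, mem_univ, true_and, notMem_empty, iff_false]
        rintro ⟨hP', rfl⟩
        exact hP hP'
      rw [this, card_empty]
  · rw [disjoint_left]
    intro j hj hj'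
    simp only [mem_filter, mem_univ, true_and] at hj hj'
    rw [hj'.2] at hj
    exact absurd hj.2 (by simp)

end CarlitzAux

namespace Part2
open CarlitzAux Finset

variable {n k : ℕ} (σ : Equiv.Perm (Fin n))

/-- `c` is a valid "sorted tuple" for `σ`: monotone, and strictly increasing across descents. -/
def IsSorted (c : Fin n → Fin (k + 1)) : Prop :=
  Monotone c ∧ ∀ (i : ℕ) (h : i + 1 < n),
    σ ⟨i + 1, h⟩ < σ ⟨i, Nat.lt_of_succ_lt h⟩ → c ⟨i, Nat.lt_of_succ_lt h⟩ < c ⟨i + 1, h⟩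

lemma sigma_lt_of_eq {c : Fin n → Fin (k + 1)} (hc : IsSorted σ c) :
    ∀ {i j : Fin n}, i < j → c i = c j → σ i < σ j := by
  have step : ∀ (i : ℕ) (h : i + 1 < n),
      c ⟨i, Nat.lt_of_succ_lt h⟩ = c ⟨i + 1, h⟩ → σ ⟨i, Nat.lt_of_succ_lt h⟩ < σ ⟨i + 1, h⟩ := by
    intro i h hceq
    by_contra hlt
    have hne : σ ⟨i, Nat.lt_of_succ_lt h⟩ ≠ σ ⟨i + 1, h⟩ := by
      intro heq
      have : (⟨i, Nat.lt_of_succ_lt h⟩ : Fin n) = ⟨i + 1, h⟩ := σ.injective heq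
      simp [Fin.ext_iff] at this
    have hgt : σ ⟨i + 1, h⟩ < σ ⟨i, Nat.lt_of_succ_lt h⟩ := by
      rcases lt_trichotomy (σ ⟨i, Nat.lt_of_succ_lt h⟩) (σ ⟨i + 1, h⟩) with h1 | h1 | h1
      · exact absurd h1 hlt
      · exact absurd h1 hne
      · exact h1
    exact absurd hceq (ne_of_lt (hc.2 i h hgt))
  have aux : ∀ (t i : ℕ) (h : i + t < n) (hi : i < n), 0 < t →
      c ⟨i, hi⟩ = c ⟨i + t, h⟩ → σ ⟨i, hi⟩ < σ ⟨i + t, h⟩ := by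
    intro t
    induction t with
    | zero => omega
    | succ t ih =>
      intro i h hi ht hceq
      rcases Nat.eq_zero_or_pos t with h0 | h0
      · subst h0
        exact step i h hceq
      · -- c is constant on [i, i+t+1]
        have hle1 : c ⟨i, hi⟩ ≤ c ⟨i + t, by omega⟩ := hc.1 (by simp [Fin.le_def])
        have hle2 : c ⟨i + t, by omega⟩ ≤ c ⟨i + t + 1, by omega⟩ := hc.1 (by simp [Fin.le_def])
        have hceq1 : c ⟨i, hi⟩ = c ⟨i + t, by omega⟩ := by
          apply le_antisymm hle1
          have he : c ⟨i + t + 1, by omega⟩ = c ⟨i + (t+1), h⟩ := rfl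
          rw [hceq, ← he]
          exact hle2
        have hceq2 : c ⟨i + t, by omega⟩ = c ⟨i + t + 1, by omega⟩ := by
          rw [← hceq1]; exact hceq
        have l1 := ih i (by omega) hi h0 hceq1
        have l2 := step (i + t) (by omega) hceq2
        exact lt_trans l1 l2
  intro i j hij hceq
  have hv : (i : ℕ) < (j : ℕ) := hij
  have := aux ((j : ℕ) - (i : ℕ)) (i : ℕ) (by omega) i.isLt (by omega)
    (by rw [show (⟨(i : ℕ), i.isLt⟩ : Fin n) = i from rfl,
      show (⟨(i : ℕ) + ((j : ℕ) - (i : ℕ)), by omega⟩ : Fin n) = j from Fin.ext (by simp; omega)]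
        ; exact hceq)
  rw [show (⟨(i : ℕ), i.isLt⟩ : Fin n) = i from rfl,
    show (⟨(i : ℕ) + ((j : ℕ) - (i : ℕ)), by omega⟩ : Fin n) = j from Fin.ext (by simp; omega)] at this
  exact this

/-- E1: fibers of `Tuple.sort` are equivalent to sorted tuples. -/
def sortFiberEquiv : {f : Fin n → Fin (k + 1) // Tuple.sort f = σ} ≃
    {c : Fin n → Fin (k + 1) // IsSorted σ c} where
  toFun f := ⟨f.1 ∘ σ, by
    obtain ⟨hmono, hties⟩ := (Tuple.eq_sort_iff).mp f.2.symm
    refine ⟨hmono, fun i h hdesc => ?_⟩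
    set a : Fin n := ⟨i, Nat.lt_of_succ_lt h⟩
    set b : Fin n := ⟨i + 1, h⟩
    have hab : a < b := by simp [a, b, Fin.lt_def]
    have hle : f.1 (σ a) ≤ f.1 (σ b) := hmono hab.le
    rcases hle.lt_or_eq with h1 | h1
    · exact h1
    · exact absurd (hties a b hab h1) (asymm hdesc)⟩
  invFun c := ⟨c.1 ∘ σ.symm, by
    symm
    rw [Tuple.eq_sort_iff]
    have hcomp : (c.1 ∘ ⇑σ.symm) ∘ ⇑σ = c.1 := by
      funext i; simp
    constructor
    · rw [hcomp]; exact c.2.1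
    · intro i j hij hceq
      rw [show ((c.1 ∘ ⇑σ.symm) (σ i)) = c.1 i by simp,
        show ((c.1 ∘ ⇑σ.symm) (σ j)) = c.1 j by simp] at hceq
      exact sigma_lt_of_eq σ c.2 hij hceq⟩
  left_inv f := by
    ext i
    simp
  right_inv c := by
    ext i
    simp

end Part2

namespace Part3
open CarlitzAux Part2 Finset

variable {n k : ℕ}

lemma descentCount_lt (hn : 1 ≤ n) (σ : Equiv.Perm (Fin n)) : descentCount n σ < n := by
  unfold descentCount
  have hmem : (⟨n - 1, by omega⟩ : Fin n) ∉ (Finset.univ.filter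
      (fun i : Fin n => ∃ h : (i : ℕ) + 1 < n, σ ⟨(i : ℕ) + 1, h⟩ < σ i)) := by
    simp only [mem_filter, mem_univ, true_and, not_exists]
    intro h
    omega
  calc _ < (Finset.univ : Finset (Fin n)).card := by
        apply card_lt_card
        rw [Finset.ssubset_iff_of_subset (filter_subset _ _)]
        exact ⟨_, mem_univ _, hmem⟩
    _ = n := by simp

variable (hn : 1 ≤ n) (σ : Equiv.Perm (Fin n))

/-- E2: sorted tuples are equivalent to `n`-subsets of `Fin (k + n - d)`. -/
noncomputable def sortedEquiv :
    {c : Fin n → Fin (k + 1) // IsSorted σ c} ≃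
    {s : Finset (Fin (k + n - descentCount n σ)) // s.card = n} := by
  classical
  set d := descentCount n σ with hd
  have hdn : d < n := descentCount_lt hn σ
  have hlast : n - 1 < n := by omega
  -- forward direction data
  have fwd : ∀ c : {c : Fin n → Fin (k + 1) // IsSorted σ c},
      ∃ g : Fin n → Fin (k + n - d), StrictMono g ∧
        ∀ i : Fin n, (g i : ℕ) = (c.1 i : ℕ) + (i : ℕ) - dBelow σ (i : ℕ) := by
    intro c
    set v : Fin n → ℕ := fun i => (c.1 i : ℕ) + (i : ℕ) - dBelow σ (i : ℕ) with hv
    have hvstep : ∀ (i : ℕ) (hi : i + 1 < n),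
        v ⟨i, Nat.lt_of_succ_lt hi⟩ < v ⟨i + 1, hi⟩ := by
      intro i hi
      have hD := dBelow_succ σ i (Nat.lt_of_succ_lt hi)
      have hDle := dBelow_le σ i
      have hcle : (c.1 ⟨i, Nat.lt_of_succ_lt hi⟩ : ℕ) ≤ (c.1 ⟨i + 1, hi⟩ : ℕ) :=
        c.2.1 (by simp [Fin.le_def])
      by_cases hdes : ∃ h : i + 1 < n, σ ⟨i + 1, h⟩ < σ ⟨i, Nat.lt_of_succ_lt hi⟩
      · obtain ⟨h', hdes'⟩ := hdes
        have hclt : (c.1 ⟨i, Nat.lt_of_succ_lt hi⟩ : ℕ) < (c.1 ⟨i + 1, hi⟩ : ℕ) :=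
          c.2.2 i hi hdes'
        rw [if_pos ⟨h', hdes'⟩] at hD
        simp only [hv]
        omega
      · rw [if_neg hdes] at hD
        simp only [hv]
        omega
    have hvmono : StrictMono v := chain_lt hvstep
    have hbound : ∀ i : Fin n, v i < k + n - d := by
      intro i
      have h1 : v i ≤ v ⟨n - 1, hlast⟩ := hvmono.monotone (by simp [Fin.le_def]; omega)
      have h2 : dBelow σ (n - 1) = d := dBelow_eq σ (n - 1) (by omega)
      have h3 : (c.1 ⟨n - 1, hlast⟩ : ℕ) ≤ k := by
        have := (c.1 ⟨n - 1, hlast⟩).isLt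
        omega
      have h4 : v ⟨n - 1, hlast⟩ = (c.1 ⟨n - 1, hlast⟩ : ℕ) + (n - 1) - d := by
        show (c.1 ⟨n - 1, hlast⟩ : ℕ) + (n - 1) - dBelow σ (n - 1) = _
        rw [h2]
      omega
    refine ⟨fun i => ⟨v i, hbound i⟩, ?_, fun i => rfl⟩
    intro a b hab
    exact Fin.mk_lt_mk.mpr (hvmono hab)
  -- backward direction data
  have bwd : ∀ s : {s : Finset (Fin (k + n - d)) // s.card = n},
      ∃ c : Fin n → Fin (k + 1), IsSorted σ c ∧
        ∀ i : Fin n, (c i : ℕ) = ((s.1.orderEmbOfFin s.2 i : Fin (k + n - d)) : ℕ)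
          + dBelow σ (i : ℕ) - (i : ℕ) := by
    intro s
    set e : Fin n → Fin (k + n - d) := fun i => s.1.orderEmbOfFin s.2 i with he
    have hstrict : StrictMono (fun i => ((e i : Fin (k + n - d)) : ℕ)) := by
      intro a b hab
      exact (s.1.orderEmbOfFin s.2).strictMono hab
    have hge := self_le_of_strictMono hstrict
    set w : Fin n → ℕ := fun i => ((e i : Fin (k + n - d)) : ℕ) + dBelow σ (i : ℕ) - (i : ℕ)
      with hw
    have hstep : ∀ (i : ℕ) (hi : i + 1 < n),
        w ⟨i, Nat.lt_of_succ_lt hi⟩ +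
          (if ∃ h : i + 1 < n, σ ⟨i + 1, h⟩ < σ ⟨i, Nat.lt_of_succ_lt hi⟩ then 1 else 0)
          ≤ w ⟨i + 1, hi⟩ := by
      intro i hi
      have hD := dBelow_succ σ i (Nat.lt_of_succ_lt hi)
      have hDle := dBelow_le σ i
      have hlt : ((e ⟨i, Nat.lt_of_succ_lt hi⟩ : Fin (k + n - d)) : ℕ) <
          ((e ⟨i + 1, hi⟩ : Fin (k + n - d)) : ℕ) := hstrict (by simp [Fin.lt_def])
      have hge1 : i ≤ ((e ⟨i, Nat.lt_of_succ_lt hi⟩ : Fin (k + n - d)) : ℕ) :=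
        hge ⟨i, Nat.lt_of_succ_lt hi⟩
      have e1 : w ⟨i, Nat.lt_of_succ_lt hi⟩ =
          ((e ⟨i, Nat.lt_of_succ_lt hi⟩ : Fin (k + n - d)) : ℕ) + dBelow σ i - i := rfl
      have e2 : w ⟨i + 1, hi⟩ =
          ((e ⟨i + 1, hi⟩ : Fin (k + n - d)) : ℕ) + dBelow σ (i + 1) - (i + 1) := rfl
      by_cases hdes : ∃ h : i + 1 < n, σ ⟨i + 1, h⟩ < σ ⟨i, Nat.lt_of_succ_lt hi⟩
      · rw [if_pos hdes]
        rw [if_pos hdes] at hD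
        rw [e1, e2]
        omega
      · rw [if_neg hdes]
        rw [if_neg hdes] at hD
        rw [e1, e2]
        omega
    have hwmono : Monotone w := by
      apply chain_le
      intro i hi
      have := hstep i hi
      split_ifs at this <;> omega
    have hwbound : ∀ i : Fin n, w i ≤ k := by
      intro i
      have h1 : w i ≤ w ⟨n - 1, hlast⟩ := hwmono (by simp [Fin.le_def]; omega)
      have h2 : dBelow σ (n - 1) = d := dBelow_eq σ (n - 1) (by omega)
      have h3 : ((e ⟨n - 1, hlast⟩ : Fin (k + n - d)) : ℕ) < k + n - d :=
        (e ⟨n - 1, hlast⟩).isLt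
      have h4 : (n - 1 : ℕ) ≤ ((e ⟨n - 1, hlast⟩ : Fin (k + n - d)) : ℕ) := hge ⟨n - 1, hlast⟩
      have h5 : w ⟨n - 1, hlast⟩ =
          ((e ⟨n - 1, hlast⟩ : Fin (k + n - d)) : ℕ) + d - (n - 1) := by
        show ((e ⟨n - 1, hlast⟩ : Fin (k + n - d)) : ℕ) + dBelow σ (n - 1) - (n - 1) = _
        rw [h2]
      omega
    refine ⟨fun i => ⟨w i, by have := hwbound i; omega⟩, ⟨?_, ?_⟩, fun i => rfl⟩
    · intro a b hab
      exact Fin.mk_le_mk.mpr (hwmono hab)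
    · intro i h hdes
      have := hstep i h
      rw [if_pos ⟨h, hdes⟩] at this
      exact Fin.mk_lt_mk.mpr (by omega)
  -- assemble the equivalence
  have hleft : ∀ (c : {c : Fin n → Fin (k + 1) // IsSorted σ c})
      (s : {s : Finset (Fin (k + n - d)) // s.card = n}),
      s.1 = Finset.univ.image (fwd c).choose → (bwd s).choose = c.1 := by
    intro c s hs
    have hgspec := (fwd c).choose_spec
    have hcspec := (bwd s).choose_spec
    have hemb : ∀ i, (fwd c).choose i = s.1.orderEmbOfFin s.2 i := by
      have h := orderEmbOfFin_unique (s := s.1) s.2 (f := (fwd c).choose)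
        (fun x => by rw [hs]; exact mem_image_of_mem _ (mem_univ x)) hgspec.1
      exact fun i => congrFun h i
    funext i
    apply Fin.ext
    have h1 := hcspec.2 i
    have h2 := hgspec.2 i
    have hgi := congrArg Fin.val (hemb i)
    have hD := dBelow_le σ (i : ℕ)
    omega
  have hright : ∀ (s : {s : Finset (Fin (k + n - d)) // s.card = n})
      (c : {c : Fin n → Fin (k + 1) // IsSorted σ c}),
      c.1 = (bwd s).choose → Finset.univ.image (fwd c).choose = s.1 := by
    intro s c hc
    have hgspec := (fwd c).choose_spec
    have hcspec := (bwd s).choose_spec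
    have hgeq : ∀ i, (fwd c).choose i = s.1.orderEmbOfFin s.2 i := by
      intro i
      apply Fin.ext
      have h1 := hgspec.2 i
      have hci : ((c.1 i : Fin (k + 1)) : ℕ) = (((bwd s).choose i : Fin (k + 1)) : ℕ) :=
        congrArg Fin.val (congrFun hc i)
      have h2 := hcspec.2 i
      have hD := dBelow_le σ (i : ℕ)
      have hge : (i : ℕ) ≤ ((s.1.orderEmbOfFin s.2 i : Fin (k + n - d)) : ℕ) :=
        self_le_of_strictMono
          (f := fun j : Fin n => ((s.1.orderEmbOfFin s.2 j : Fin (k + n - d)) : ℕ))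
          (fun a b hab => (s.1.orderEmbOfFin s.2).strictMono hab) i
      omega
    rw [show (fwd c).choose = fun i => s.1.orderEmbOfFin s.2 i from funext hgeq]
    apply eq_of_subset_of_card_le
    · intro x hx
      rcases mem_image.mp hx with ⟨i, -, rfl⟩
      exact orderEmbOfFin_mem s.1 s.2 i
    · rw [card_image_of_injective _
        (fun a b hab => (s.1.orderEmbOfFin s.2).injective hab : Function.Injective
          (fun i => s.1.orderEmbOfFin s.2 i)), card_univ, Fintype.card_fin, s.2]
  exact
    { toFun := fun c => ⟨Finset.univ.image (fwd c).choose, by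
        rw [card_image_of_injective _ (fwd c).choose_spec.1.injective, card_univ,
          Fintype.card_fin]⟩
      invFun := fun s => ⟨(bwd s).choose, (bwd s).choose_spec.1⟩
      left_inv := fun c => Subtype.ext (hleft c _ rfl)
      right_inv := fun s => Subtype.ext (hright s _ rfl) }

end Part3

namespace Part4
open CarlitzAux Part2 Part3 Finset

theorem worpitzky (n : ℕ) (hn : 1 ≤ n) (k : ℕ) :
    (k + 1) ^ n = ∑ σ : Equiv.Perm (Fin n), (k + n - descentCount n σ).choose n := by
  classical
  have h1 : (k + 1) ^ n = Fintype.card (Fin n → Fin (k + 1)) := by simp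
  rw [h1, ← Finset.card_univ, Finset.card_eq_sum_card_fiberwise
    (f := fun f : Fin n → Fin (k + 1) => Tuple.sort f) (t := Finset.univ)
    (fun f _ => Finset.mem_univ _)]
  apply Finset.sum_congr rfl
  intro σ _
  have e := (Part2.sortFiberEquiv (k := k) σ).trans (Part3.sortedEquiv (k := k) hn σ)
  have hcard := Fintype.card_congr e
  rw [Fintype.card_finset_len, Fintype.card_fin, Fintype.card_subtype] at hcard
  exact hcard

theorem carlitz (n : ℕ) (hn : 1 ≤ n) (p : ℝ) (hp : 0 < p) (hp1 : p < 1) :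
    (∑' k : ℕ, ((k + 1 : ℝ)) ^ n * p * (1 - p) ^ k) =
      (p ^ n)⁻¹ * ∑ q ∈ Finset.range n, (eulerian n q : ℝ) * (1 - p) ^ q := by
  have hp0 : p ≠ 0 := ne_of_gt hp
  set x : ℝ := 1 - p with hxdef
  have hx0 : 0 < x := by rw [hxdef]; linarith
  have hx1 : x < 1 := by rw [hxdef]; linarith
  have hxn : ‖x‖ < 1 := by rw [Real.norm_eq_abs, abs_of_pos hx0]; exact hx1
  have hbase : Summable (fun k : ℕ => ((k + n).choose n : ℝ) * x ^ k) :=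
    summable_choose_mul_geometric_of_norm_lt_one n hxn
  have hsummand : ∀ σ : Equiv.Perm (Fin n),
      Summable (fun k : ℕ => ((k + n - descentCount n σ).choose n : ℝ) * p * x ^ k) := by
    intro σ
    refine Summable.of_nonneg_of_le ?_ ?_ (hbase.mul_right p)
    · intro k
      exact mul_nonneg (mul_nonneg (Nat.cast_nonneg _) hp.le) (pow_nonneg hx0.le k)
    · intro k
      have hc : ((k + n - descentCount n σ).choose n : ℝ) ≤ ((k + n).choose n : ℝ) := by
        exact_mod_cast Nat.choose_le_choose n (Nat.sub_le _ _)
      calc ((k + n - descentCount n σ).choose n : ℝ) * p * x ^ k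
          ≤ ((k + n).choose n : ℝ) * p * x ^ k :=
            mul_le_mul_of_nonneg_right (mul_le_mul_of_nonneg_right hc hp.le)
              (pow_nonneg hx0.le k)
        _ = ((k + n).choose n : ℝ) * x ^ k * p := by ring
  have hT : ∀ d : ℕ, ∑' k : ℕ, ((k + n - d).choose n : ℝ) * x ^ k
      = x ^ d * (1 / (1 - x) ^ (n + 1)) := by
    intro d
    have hinj : Function.Injective (fun j : ℕ => j + d) := fun a b h => Nat.add_right_cancel h
    have hsupp : Function.support (fun k : ℕ => ((k + n - d).choose n : ℝ) * x ^ k)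
        ⊆ Set.range (fun j : ℕ => j + d) := by
      intro k hk
      rcases Nat.lt_or_ge k d with h | h
      · exfalso
        apply hk
        have hz : (k + n - d).choose n = 0 := Nat.choose_eq_zero_of_lt (by omega)
        simp [hz]
      · exact ⟨k - d, by show k - d + d = k; omega⟩
    rw [← hinj.tsum_eq hsupp]
    have hcongr : ∀ j : ℕ, (((j + d) + n - d).choose n : ℝ) * x ^ (j + d)
        = x ^ d * (((j + n).choose n : ℝ) * x ^ j) := by
      intro j
      rw [show j + d + n - d = j + n by omega, pow_add]
      ring
    rw [tsum_congr hcongr, tsum_mul_left, tsum_choose_mul_geometric_of_norm_lt_one n hxn]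
  have key : ∀ k : ℕ, ((k : ℝ) + 1) ^ n * p * x ^ k
      = ∑ σ : Equiv.Perm (Fin n), ((k + n - descentCount n σ).choose n : ℝ) * p * x ^ k := by
    intro k
    have h' : ((k : ℝ) + 1) ^ n
        = ∑ σ : Equiv.Perm (Fin n), ((k + n - descentCount n σ).choose n : ℝ) := by
      exact_mod_cast worpitzky n hn k
    rw [h', Finset.sum_mul, Finset.sum_mul]
  calc (∑' k : ℕ, ((k : ℝ) + 1) ^ n * p * x ^ k)
      = ∑' k : ℕ, ∑ σ : Equiv.Perm (Fin n),
          ((k + n - descentCount n σ).choose n : ℝ) * p * x ^ k := tsum_congr key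
    _ = ∑ σ : Equiv.Perm (Fin n), ∑' k : ℕ,
          ((k + n - descentCount n σ).choose n : ℝ) * p * x ^ k :=
        Summable.tsum_finsetSum (fun σ _ => hsummand σ)
    _ = ∑ σ : Equiv.Perm (Fin n), (p ^ n)⁻¹ * x ^ descentCount n σ := by
        apply Finset.sum_congr rfl
        intro σ _
        have h1 : (fun k : ℕ => ((k + n - descentCount n σ).choose n : ℝ) * p * x ^ k)
            = fun k : ℕ => p * (((k + n - descentCount n σ).choose n : ℝ) * x ^ k) := by
          funext k; ring
        rw [h1, tsum_mul_left, hT (descentCount n σ)]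
        rw [show (1 : ℝ) - x = p by rw [hxdef]; ring]
        field_simp
        ring
    _ = (p ^ n)⁻¹ * ∑ σ : Equiv.Perm (Fin n), x ^ descentCount n σ := by
        rw [← Finset.mul_sum]
    _ = (p ^ n)⁻¹ * ∑ q ∈ Finset.range n, (eulerian n q : ℝ) * x ^ q := by
        congr 1
        rw [← Finset.sum_fiberwise_of_maps_to
          (g := fun σ : Equiv.Perm (Fin n) => descentCount n σ)
          (fun σ _ => Finset.mem_range.mpr (Part3.descentCount_lt hn σ))]
        apply Finset.sum_congr rfl
        intro q _
        rw [Finset.sum_congr rfl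
          (fun σ hσ => by rw [(Finset.mem_filter.mp hσ).2]),
          Finset.sum_const, nsmul_eq_mul]
        congr 1

end Part4

/-- Carlitz's identity: for `n ≥ 1` and `p ∈ (0,1)`,
`∑_{k≥1} k^n p (1-p)^{k-1} = p^{-n} ∑_{q=0}^{n-1} ⟨n over q⟩ (1-p)^q`. -/
theorem carlitz_identity (n : ℕ) (hn : 1 ≤ n) (p : ℝ) (hp : 0 < p) (hp1 : p < 1) :
    (∑' k : ℕ, ((k + 1 : ℝ)) ^ n * p * (1 - p) ^ k) =
      (p ^ n)⁻¹ * ∑ q ∈ Finset.range n, (eulerian n q : ℝ) * (1 - p) ^ q :=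
  Part4.carlitz n hn p hp hp1
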